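/- arXiv:2506.18250 — 2 statements merged into one kernel-verified Lean document; each statement's English description precedes it below -/
import Mathlib

section
/- (Dichotomy for final states, stepwise version.) Let f : X ⇀ X be a partial map on a metric space (X,d), a < b integers, F the restricted time extension on D_F with cost function c_d associated to d. Let G, B ⊆ {b} × X be disjoint subsets with G ⊔ B = {b} × X. Then for every ε ∈ [0,∞), D_F is the disjoint union of G_{F,ε} and B_{F,−ε}: every point of D_F either admits an ε-controlled path into G, or else every dead-end terminal state reachable from it by an ε-controlled path lies in B — and not both. -/
open scoped ENNReal

variable {Y : Type*}

/-- The domain of a partial map represented as `Y → Option Y`. -/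
def pdom {Y : Type*} (F : Y → Option Y) : Set Y := {y | F y ≠ none}

/-- `IsCtrlPath F c ε y A n` : `y` admits an `ε`-controlled path of length `n` into `A`. -/
def IsCtrlPath {Y : Type*} (F : Y → Option Y) (c : Y → Y → ℝ≥0∞) (ε : ℝ≥0∞)
    (y : Y) (A : Set Y) : ℕ → Prop
  | 0 => y ∈ A
  | (n + 1) => ∃ ys zs : ℕ → Y,
      (∀ i ≤ n, F (ys i) = some (zs i)) ∧
      c y (ys 0) ≤ ε ∧
      (∀ i < n, c (zs i) (ys (i + 1)) ≤ ε) ∧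
      zs n ∈ A

/-- `ε_Σ`-controlled path: total perturbation cost at most `ε`. -/
def IsSumCtrlPath {Y : Type*} (F : Y → Option Y) (c : Y → Y → ℝ≥0∞) (ε : ℝ≥0∞)
    (y : Y) (A : Set Y) : ℕ → Prop
  | 0 => y ∈ A
  | (n + 1) => ∃ ys zs : ℕ → Y,
      (∀ i ≤ n, F (ys i) = some (zs i)) ∧
      (c y (ys 0) + ∑ i ∈ Finset.range n, c (zs i) (ys (i + 1))) ≤ ε ∧
      zs n ∈ A

/-- The `ε`-attracting basin. -/
def basin {Y : Type*} (F : Y → Option Y) (c : Y → Y → ℝ≥0∞) (ε : ℝ≥0∞) (A : Set Y) : Set Y :=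
  {y | ∃ n, IsCtrlPath F c ε y A n}

/-- The `ε_Σ`-attracting basin. -/
def sumBasin {Y : Type*} (F : Y → Option Y) (c : Y → Y → ℝ≥0∞) (ε : ℝ≥0∞) (A : Set Y) : Set Y :=
  {y | ∃ n, IsSumCtrlPath F c ε y A n}

/-- The `-0`-attracting basin. -/
def negZeroBasin {Y : Type*} (F : Y → Option Y) (c : Y → Y → ℝ≥0∞) (A : Set Y) : Set Y :=
  basin F c 0 (A \ pdom F)

/-- The `-ε`-attracting basin. -/
def negBasin {Y : Type*} (F : Y → Option Y) (c : Y → Y → ℝ≥0∞) (ε : ℝ≥0∞) (A : Set Y) : Set Y :=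
  {y | y ∈ negZeroBasin F c A ∧
    ∀ y', y' ∉ pdom F → y ∈ basin F c ε ({y'} : Set Y) → y' ∈ A}

/-- The `-ε_Σ`-attracting basin. -/
def negSumBasin {Y : Type*} (F : Y → Option Y) (c : Y → Y → ℝ≥0∞) (ε : ℝ≥0∞) (A : Set Y) : Set Y :=
  {y | y ∈ sumBasin F c 0 (A \ pdom F) ∧
    ∀ y', y' ∉ pdom F → y ∈ sumBasin F c ε ({y'} : Set Y) → y' ∈ A}



/-- Iteration of a partial map `f : X → Option X`. -/
def iterOpt {X : Type*} (f : X → Option X) : ℕ → X → Option X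
  | 0, x => some x
  | (n + 1), x => (iterOpt f n x).bind f

/-- The subset `D_F` of the time extension. -/
def DF {X : Type*} (f : X → Option X) (a b : ℤ) : Set (ℤ × X) :=
  {p | ∃ n : ℕ, (n : ℤ) ≤ b - a ∧ p.1 = b - (n : ℤ) ∧ (iterOpt f n p.2).isSome}

open Classical in
/-- The restriction `F` of the time extension `f̃(t,x) = (t+1, f(x))` to `D_F`. -/
noncomputable def FF {X : Type*} (f : X → Option X) (a b : ℤ) :
    ↥(DF f a b) → Option ↥(DF f a b) :=
  fun p =>
    if h : ∃ q : ↥(DF f a b),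
        (q : ℤ × X).1 = (p : ℤ × X).1 + 1 ∧ f (p : ℤ × X).2 = some (q : ℤ × X).2 then
      some h.choose
    else none

/-- The cost function on `D_F` associated to the metric `d`. -/
noncomputable def cd {X : Type*} [MetricSpace X] (f : X → Option X) (a b : ℤ) :
    ↥(DF f a b) → ↥(DF f a b) → ℝ≥0∞ :=
  fun p q =>
    if (p : ℤ × X).1 = (q : ℤ × X).1 then edist (p : ℤ × X).2 (q : ℤ × X).2 else ⊤

/-! ### Auxiliary lemmas -/

lemma iterOpt_succ' {X : Type*} (f : X → Option X) (n : ℕ) (x : X) :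
    iterOpt f (n + 1) x = (f x).bind (iterOpt f n) := by
  induction n generalizing x with
  | zero =>
    show (iterOpt f 0 x).bind f = _
    cases h : f x <;> simp [iterOpt, h]
  | succ n ih =>
    show (iterOpt f (n + 1) x).bind f = _
    rw [ih]
    cases h : f x <;> simp [iterOpt, h]

lemma DF_time_le {X : Type*} {f : X → Option X} {a b : ℤ} {p : ℤ × X}
    (hp : p ∈ DF f a b) : p.1 ≤ b := by
  obtain ⟨n, _, ht, _⟩ := hp
  omega

lemma FF_eq_none {X : Type*} (f : X → Option X) (a b : ℤ) (p : ↥(DF f a b))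
    (h : (p : ℤ × X).1 = b) : FF f a b p = none := by
  rw [FF, dif_neg]
  rintro ⟨q, hq1, _⟩
  have := DF_time_le q.2
  omega

lemma FF_isSome {X : Type*} (f : X → Option X) (a b : ℤ) (p : ↥(DF f a b))
    (h : (p : ℤ × X).1 ≠ b) :
    ∃ q, FF f a b p = some q ∧ (q : ℤ × X).1 = (p : ℤ × X).1 + 1 := by
  obtain ⟨n, hn, ht, hs⟩ := p.2
  cases n with
  | zero => omega
  | succ m =>
    rw [iterOpt_succ'] at hs
    cases hfx : f (p : ℤ × X).2 with
    | none => rw [hfx] at hs; simp at hs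
    | some x' =>
      rw [hfx] at hs
      rw [Option.bind_some] at hs
      have hq : ((p : ℤ × X).1 + 1, x') ∈ DF f a b := by
        refine ⟨m, by push_cast at hn ⊢; omega, by push_cast at ht ⊢; omega, hs⟩
      have hex : ∃ q : ↥(DF f a b),
          (q : ℤ × X).1 = (p : ℤ × X).1 + 1 ∧ f (p : ℤ × X).2 = some (q : ℤ × X).2 :=
        ⟨⟨_, hq⟩, rfl, hfx⟩
      refine ⟨hex.choose, ?_, hex.choose_spec.1⟩
      rw [FF, dif_pos hex]

lemma cd_self {X : Type*} [MetricSpace X] (f : X → Option X) (a b : ℤ)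
    (p : ↥(DF f a b)) : cd f a b p p = 0 := by
  simp [cd]

lemma ctrlPath_cons {Y : Type*} {F : Y → Option Y} {c : Y → Y → ℝ≥0∞} {ε : ℝ≥0∞}
    {y z : Y} {A : Set Y} {n : ℕ} (hrefl : c y y ≤ ε) (hyz : F y = some z)
    (h : IsCtrlPath F c ε z A n) : IsCtrlPath F c ε y A (n + 1) := by
  cases n with
  | zero =>
    exact ⟨fun _ => y, fun _ => z, fun i _ => hyz, hrefl,
      fun i hi => absurd hi (Nat.not_lt_zero i), h⟩
  | succ n =>
    obtain ⟨ys, zs, h1, h2, h3, h4⟩ := h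
    refine ⟨fun i => match i with | 0 => y | (j + 1) => ys j,
            fun i => match i with | 0 => z | (j + 1) => zs j, ?_, hrefl, ?_, h4⟩
    · intro i hi
      match i with
      | 0 => exact hyz
      | j + 1 => exact h1 j (by omega)
    · intro i hi
      match i with
      | 0 => exact h2
      | j + 1 => exact h3 j (by omega)

lemma ctrlPath_mono {Y : Type*} {F : Y → Option Y} {c : Y → Y → ℝ≥0∞} {ε : ℝ≥0∞}
    {y : Y} {A A' : Set Y} {n : ℕ} (hAA : A ⊆ A')
    (h : IsCtrlPath F c ε y A n) : IsCtrlPath F c ε y A' n := by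
  cases n with
  | zero => exact hAA h
  | succ n =>
    obtain ⟨ys, zs, h1, h2, h3, h4⟩ := h
    exact ⟨ys, zs, h1, h2, h3, hAA h4⟩

lemma ctrlPath_mono_eps {Y : Type*} {F : Y → Option Y} {c : Y → Y → ℝ≥0∞} {ε ε' : ℝ≥0∞}
    {y : Y} {A : Set Y} {n : ℕ} (hεε : ε ≤ ε')
    (h : IsCtrlPath F c ε y A n) : IsCtrlPath F c ε' y A n := by
  cases n with
  | zero => exact h
  | succ n =>
    obtain ⟨ys, zs, h1, h2, h3, h4⟩ := h
    exact ⟨ys, zs, h1, h2.trans hεε, fun i hi => (h3 i hi).trans hεε, h4⟩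

lemma ctrlPath_single {Y : Type*} {F : Y → Option Y} {c : Y → Y → ℝ≥0∞} {ε : ℝ≥0∞}
    {y : Y} {A : Set Y} {n : ℕ} (h : IsCtrlPath F c ε y A n) :
    ∃ q ∈ A, IsCtrlPath F c ε y ({q} : Set Y) n := by
  cases n with
  | zero => exact ⟨y, h, rfl⟩
  | succ n =>
    obtain ⟨ys, zs, h1, h2, h3, h4⟩ := h
    exact ⟨zs n, h4, ys, zs, h1, h2, h3, rfl⟩

lemma DF_terminate {X : Type*} [MetricSpace X] (f : X → Option X) (a b : ℤ) :
    ∀ n : ℕ, ∀ p : ↥(DF f a b), (p : ℤ × X).1 = b - n →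
      ∃ q : ↥(DF f a b), (q : ℤ × X).1 = b ∧
        IsCtrlPath (FF f a b) (cd f a b) 0 p ({q} : Set ↥(DF f a b)) n := by
  intro n
  induction n with
  | zero => intro p hp; exact ⟨p, by push_cast at hp; omega, rfl⟩
  | succ n ih =>
    intro p hp
    obtain ⟨z, hz, hz1⟩ := FF_isSome f a b p (by push_cast at hp; omega)
    obtain ⟨q, hq, hpath⟩ := ih z (by push_cast at hp hz1 ⊢; omega)
    exact ⟨q, hq, ctrlPath_cons (by rw [cd_self]) hz hpath⟩

theorem stmt13 {X : Type*} [MetricSpace X] (f : X → Option X) (a b : ℤ) (hab : a < b)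
    (G B : Set ↥(DF f a b)) (hGB : Disjoint G B)
    (hcov : G ∪ B = {p : ↥(DF f a b) | (p : ℤ × X).1 = b})
    (ε : ℝ≥0∞) (hε : ε ≠ ⊤) :
    basin (FF f a b) (cd f a b) ε G ∪ negBasin (FF f a b) (cd f a b) ε B = Set.univ ∧
    Disjoint (basin (FF f a b) (cd f a b) ε G) (negBasin (FF f a b) (cd f a b) ε B) := by
  -- a terminal point lies at time `b` iff it is not in the domain of `FF`
  have hterm : ∀ q : ↥(DF f a b), q ∉ pdom (FF f a b) → (q : ℤ × X).1 = b := by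
    intro q hq
    by_contra hqb
    obtain ⟨z, hz, _⟩ := FF_isSome f a b q hqb
    exact hq (by simp [pdom, hz])
  have hterm' : ∀ q : ↥(DF f a b), (q : ℤ × X).1 = b → q ∉ pdom (FF f a b) := by
    intro q hq hmem
    exact hmem (FF_eq_none f a b q hq)
  -- the key disjointness argument
  have hdisj : ∀ p : ↥(DF f a b),
      p ∈ basin (FF f a b) (cd f a b) ε G →
      p ∈ negBasin (FF f a b) (cd f a b) ε B → False := by
    intro p hpG hpB
    obtain ⟨n, hpath⟩ := hpG
    obtain ⟨q, hqG, hq⟩ := ctrlPath_single hpath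
    have hqb : (q : ℤ × X).1 = b := by
      have h := Set.mem_union_left B hqG
      rw [hcov] at h
      exact h
    have hqB : q ∈ B := hpB.2 q (hterm' q hqb) ⟨n, hq⟩
    exact Set.disjoint_left.mp hGB hqG hqB
  constructor
  · ext p
    simp only [Set.mem_union, Set.mem_univ, iff_true]
    by_cases hG : p ∈ basin (FF f a b) (cd f a b) ε G
    · exact Or.inl hG
    · right
      refine ⟨?_, ?_⟩
      · -- negZeroBasin: uncontrolled path into `B \ pdom`
        obtain ⟨n, hn, ht, hs⟩ := p.2
        obtain ⟨q, hqb, hq⟩ := DF_terminate f a b n p ht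
        have hqGB : q ∈ G ∪ B := by rw [hcov]; exact hqb
        have hqB : q ∈ B := by
          rcases hqGB with hqG | hqB
          · exact absurd ⟨n, ctrlPath_mono_eps (zero_le : (0 : ℝ≥0∞) ≤ ε)
              (ctrlPath_mono (Set.singleton_subset_iff.mpr hqG) hq)⟩ hG
          · exact hqB
        exact ⟨n, ctrlPath_mono (Set.singleton_subset_iff.mpr
          ⟨hqB, hterm' q hqb⟩) hq⟩
      · intro y' hy' hby'
        have hyb : (y' : ℤ × X).1 = b := hterm y' hy'
        have : y' ∈ G ∪ B := by rw [hcov]; exact hyb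
        rcases this with hyG | hyB
        · obtain ⟨n, hpath⟩ := hby'
          exact absurd ⟨n, ctrlPath_mono (Set.singleton_subset_iff.mpr hyG) hpath⟩ hG
        · exact hyB
  · exact Set.disjoint_left.mpr fun p hpG hpB => hdisj p hpG hpB
end

section
/- (Covering theorem.) Let f : X ⇀ X be a partial map on a metric space (X,d), F the restricted time extension on D_F with cost c_d, and G, B ⊆ {b} × X disjoint with G ⊔ B = {b} × X. If there exists (b−n, x) ∈ dom(F) with Fⁿ(b−n,x) ∈ G for some positive integer n, then D_F ∖ B = ⋃_{ε ∈ ℝ} G_{F,ε_Σ} = ⋃_{ε ∈ ℝ} G_{F,ε}; that is, every point of D_F not in B eventually lies in the ε-attracting basin of G for sufficiently large finite ε. -/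
open scoped ENNReal

variable {Y : Type*}

lemma iterOpt_add {X : Type*} (f : X → Option X) (m n : ℕ) (x : X) :
    iterOpt f (m + n) x = (iterOpt f m x).bind (iterOpt f n) := by
  induction n with
  | zero => rw [Nat.add_zero]; cases iterOpt f m x <;> rfl
  | succ n ih =>
      rw [show m + (n+1) = (m+n)+1 from rfl]
      rw [iterOpt, ih]
      cases iterOpt f m x <;> simp [iterOpt]

lemma DF_fst_le {X : Type*} {f : X → Option X} {a b : ℤ} {q : ℤ × X} (h : q ∈ DF f a b) :
    q.1 ≤ b := by
  obtain ⟨n, _, h2, _⟩ := h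
  have : (0:ℤ) ≤ (n:ℤ) := Int.natCast_nonneg n
  omega

lemma FF_spec {X : Type*} {f : X → Option X} {a b : ℤ} {p q : ↥(DF f a b)}
    (h : FF f a b p = some q) :
    (q : ℤ × X).1 = (p : ℤ × X).1 + 1 ∧ f (p : ℤ × X).2 = some (q : ℤ × X).2 := by
  unfold FF at h
  split at h
  · rename_i hex
    obtain rfl : hex.choose = q := Option.some.inj h
    exact hex.choose_spec
  · exact absurd h (by simp)

lemma FF_eq_some {X : Type*} {f : X → Option X} {a b : ℤ} {p : ↥(DF f a b)} {x₂ : X}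
    (hx : f (p : ℤ × X).2 = some x₂) (hq : ((p : ℤ × X).1 + 1, x₂) ∈ DF f a b) :
    FF f a b p = some ⟨((p : ℤ × X).1 + 1, x₂), hq⟩ := by
  have hex : ∃ q : ↥(DF f a b),
      (q : ℤ × X).1 = (p : ℤ × X).1 + 1 ∧ f (p : ℤ × X).2 = some (q : ℤ × X).2 :=
    ⟨⟨((p : ℤ × X).1 + 1, x₂), hq⟩, rfl, hx⟩
  unfold FF
  rw [dif_pos hex]
  congr 1
  obtain ⟨h1, h2⟩ := hex.choose_spec
  apply Subtype.ext
  apply Prod.ext h1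
  exact (Option.some.inj (hx.symm.trans h2)).symm

lemma FF_none {X : Type*} {f : X → Option X} {a b : ℤ} {p : ↥(DF f a b)}
    (h : (p : ℤ × X).1 = b) : FF f a b p = none := by
  unfold FF
  rw [dif_neg]
  rintro ⟨q, h1, -⟩
  have := DF_fst_le q.2
  omega

lemma iterOpt_FF_fst {X : Type*} {f : X → Option X} {a b : ℤ} {n : ℕ} {p q : ↥(DF f a b)}
    (h : iterOpt (FF f a b) n p = some q) : (q : ℤ × X).1 = (p : ℤ × X).1 + n := by
  induction n generalizing q with
  | zero => obtain rfl : p = q := Option.some.inj h; simp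
  | succ n ih =>
      rw [iterOpt] at h
      obtain ⟨r, hr, hq⟩ := Option.bind_eq_some_iff.mp h
      have := (FF_spec hq).1
      have := ih hr
      push_cast
      omega

lemma orbit_spec {X : Type*} (f : X → Option X) (a b : ℤ) (p : ↥(DF f a b)) (m : ℕ)
    (hm : (m : ℤ) ≤ b - a) (hp1 : (p : ℤ × X).1 = b - m)
    (hp2 : (iterOpt f m (p : ℤ × X).2).isSome) :
    ∀ i ≤ m, ∃ q : ↥(DF f a b), iterOpt (FF f a b) i p = some q ∧
      (q : ℤ × X).1 = b - m + i ∧ iterOpt f i (p : ℤ × X).2 = some (q : ℤ × X).2 := by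
  intro i hi
  induction i with
  | zero => exact ⟨p, rfl, by simpa using hp1, rfl⟩
  | succ i ih =>
      obtain ⟨r, hr1, hr2, hr3⟩ := ih (by omega)
      obtain ⟨w, hw⟩ := Option.isSome_iff_exists.mp hp2
      have hsplit : (iterOpt f (i+1) (p : ℤ × X).2).bind (iterOpt f (m - (i+1)))
          = some w := by
        rw [← iterOpt_add, show i + 1 + (m - (i+1)) = m by omega]; exact hw
      obtain ⟨z, hz1, hz2⟩ := Option.bind_eq_some_iff.mp hsplit
      have hfz : f (r : ℤ × X).2 = some z := by
        rw [iterOpt, hr3] at hz1; exact hz1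
      have hmem : ((r : ℤ × X).1 + 1, z) ∈ DF f a b := by
        refine ⟨m - (i+1), by push_cast; omega, ?_, by rw [hz2]; rfl⟩
        show (r : ℤ × X).1 + 1 = b - ((m - (i+1) : ℕ) : ℤ)
        push_cast
        omega
      refine ⟨⟨((r : ℤ × X).1 + 1, z), hmem⟩, ?_, by show (r : ℤ × X).1 + 1 = b - (m:ℤ) + ((i+1 : ℕ):ℤ); push_cast; omega, ?_⟩
      · rw [iterOpt, hr1]
        exact FF_eq_some hfz hmem
      · rw [iterOpt, hr3]
        exact hfz

theorem stmt16 {X : Type*} [MetricSpace X] (f : X → Option X) (a b : ℤ) (hab : a < b)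
    (G B : Set ↥(DF f a b)) (hGB : Disjoint G B)
    (hcov : G ∪ B = {p : ↥(DF f a b) | (p : ℤ × X).1 = b})
    (hhit : ∃ (p q : ↥(DF f a b)) (n : ℕ), 0 < n ∧
      iterOpt (FF f a b) n p = some q ∧ q ∈ G) :
    Set.univ \ B = (⋃ ε ∈ {ε : ℝ≥0∞ | ε ≠ ⊤}, sumBasin (FF f a b) (cd f a b) ε G) ∧
    Set.univ \ B = (⋃ ε ∈ {ε : ℝ≥0∞ | ε ≠ ⊤}, basin (FF f a b) (cd f a b) ε G) := by
  classical
  have hGtop : ∀ y ∈ G, (y : ℤ × X).1 = b := fun y hy => by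
    have h : y ∈ G ∪ B := Or.inl hy
    rw [hcov] at h; exact h
  have hBtop : ∀ y ∈ B, (y : ℤ × X).1 = b := fun y hy => by
    have h : y ∈ G ∪ B := Or.inr hy
    rw [hcov] at h; exact h
  have hnotB : ∀ (ε : ℝ≥0∞), ε ≠ ⊤ → ∀ (y ys0 zs0 : ↥(DF f a b)),
      cd f a b y ys0 ≤ ε → FF f a b ys0 = some zs0 → y ∉ B := by
    intro ε hε y ys0 zs0 hc hF hyB
    have h1 : (y : ℤ × X).1 = (ys0 : ℤ × X).1 := by
      by_contra hne
      simp only [cd, if_neg hne] at hc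
      exact hε (top_le_iff.mp hc)
    have h2 : FF f a b ys0 = none := FF_none (by rw [← h1]; exact hBtop y hyB)
    rw [hF] at h2; exact absurd h2 (by simp)
  have hsubS : ∀ (ε : ℝ≥0∞), ε ≠ ⊤ → ∀ y ∈ sumBasin (FF f a b) (cd f a b) ε G, y ∉ B := by
    rintro ε hε y ⟨n, hn⟩
    cases n with
    | zero => exact fun hB => Set.disjoint_left.mp hGB hn hB
    | succ n =>
        obtain ⟨ys, zs, hF, hc, -⟩ := hn
        exact hnotB ε hε y (ys 0) (zs 0) (le_trans le_self_add hc) (hF 0 (Nat.zero_le n))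
  have hsubC : ∀ (ε : ℝ≥0∞), ε ≠ ⊤ → ∀ y ∈ basin (FF f a b) (cd f a b) ε G, y ∉ B := by
    rintro ε hε y ⟨n, hn⟩
    cases n with
    | zero => exact fun hB => Set.disjoint_left.mp hGB hn hB
    | succ n =>
        obtain ⟨ys, zs, hF, hc, -, -⟩ := hn
        exact hnotB ε hε y (ys 0) (zs 0) hc (hF 0 (Nat.zero_le n))
  have key : ∀ y : ↥(DF f a b), y ∉ B → ∃ ε : ℝ≥0∞, ε ≠ ⊤ ∧
      y ∈ sumBasin (FF f a b) (cd f a b) ε G ∧ y ∈ basin (FF f a b) (cd f a b) ε G := by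
    intro y hyB
    obtain ⟨n', hn', hy1, hy2⟩ := y.2
    cases n' with
    | zero =>
        have hyG : y ∈ G := by
          have h : y ∈ G ∪ B := by rw [hcov]; simpa using hy1
          exact h.resolve_right hyB
        exact ⟨0, by simp, ⟨0, hyG⟩, ⟨0, hyG⟩⟩
    | succ k =>
        obtain ⟨p, q, n, hn, hit, hqG⟩ := hhit
        obtain ⟨m, hm, hp1, hp2⟩ := p.2
        have hq1 : (q : ℤ × X).1 = b := hGtop q hqG
        have hmn : m = n := by
          have h := iterOpt_FF_fst hit
          rw [hq1, hp1] at h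
          omega
        subst hmn
        obtain ⟨r, hr1, hr2, hr3⟩ := orbit_spec f a b p m hm hp1 hp2 (m-1) (by omega)
        have hFr : FF f a b r = some q := by
          have h : iterOpt (FF f a b) (m-1+1) p = some q := by
            rw [Nat.sub_add_cancel hn]; exact hit
          rw [iterOpt, hr1] at h
          exact h
        have hrt : (r : ℤ × X).1 = b - 1 := by rw [hr2]; push_cast; omega
        set O : ℕ → ↥(DF f a b) := fun i => (iterOpt (FF f a b) i y).getD y with hO
        have hOs : ∀ i ≤ k+1, iterOpt (FF f a b) i y = some (O i) ∧
            (O i : ℤ × X).1 = b - ((k:ℤ)+1) + i := by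
          intro i hi
          obtain ⟨q', h1, h2, h3⟩ := orbit_spec f a b y (k+1) hn' hy1 hy2 i hi
          have he : O i = q' := by rw [hO]; simp only [h1]; rfl
          rw [he]
          refine ⟨h1, ?_⟩
          rw [h2]; push_cast; ring
        have hstepO : ∀ i < k+1, FF f a b (O i) = some (O (i+1)) := by
          intro i hi
          have h1 := (hOs i (by omega)).1
          have h2 := (hOs (i+1) (by omega)).1
          rw [iterOpt, h1] at h2
          exact h2
        have hO0 : O 0 = y := by
          have h := (hOs 0 (by omega)).1
          exact (Option.some.inj h).symm
        have hOkt : (O k : ℤ × X).1 = b - 1 := by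
          have h := (hOs k (by omega)).2
          omega
        set ε : ℝ≥0∞ := edist (O k : ℤ × X).2 (r : ℤ × X).2 with hε
        set ys : ℕ → ↥(DF f a b) := fun i => if i < k then O i else r with hys
        set zs : ℕ → ↥(DF f a b) := fun i => if i < k then O (i+1) else q with hzs
        have hstep : ∀ i ≤ k, FF f a b (ys i) = some (zs i) := by
          intro i hi
          by_cases h : i < k
          · simp only [hys, hzs, if_pos h]
            exact hstepO i (by omega)
          · simp only [hys, hzs, if_neg h]
            exact hFr
        have hczero : ∀ u : ↥(DF f a b), cd f a b u u = 0 := fun u => by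
          simp [cd]
        have hckr : cd f a b (O k) r = ε := by
          simp only [cd, hε]
          rw [if_pos (by rw [hOkt, hrt])]
        have hcy : cd f a b y (ys 0) ≤ ε := by
          by_cases h : 0 < k
          · have he : ys 0 = y := by simp only [hys, if_pos h]; exact hO0
            rw [he, hczero]
            exact zero_le
          · have hk : k = 0 := by omega
            have hOk : O k = y := by rw [hk]; exact hO0
            have he : ys 0 = r := by simp only [hys, if_neg (by omega : ¬ (0:ℕ) < k)]
            rw [he, ← hOk, hckr]
        have hint : ∀ i < k, cd f a b (zs i) (ys (i+1)) ≤ ε := by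
          intro i hi
          by_cases h : i + 1 < k
          · have he : zs i = ys (i+1) := by simp only [hys, hzs, if_pos hi, if_pos h]
            rw [he, hczero]
            exact zero_le
          · have h1 : zs i = O k := by
              simp only [hzs, if_pos hi]
              congr 1
              omega
            have h2 : ys (i+1) = r := by simp only [hys, if_neg h]
            rw [h1, h2, hckr]
        have hend : zs k = q := by simp only [hzs, if_neg (lt_irrefl k)]
        have hsum : cd f a b y (ys 0)
            + ∑ i ∈ Finset.range k, cd f a b (zs i) (ys (i+1)) ≤ ε := by
          by_cases h : 0 < k
          · have h1 : cd f a b y (ys 0) = 0 := by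
              have he : ys 0 = y := by simp only [hys, if_pos h]; exact hO0
              rw [he, hczero]
            have h2 : ∑ i ∈ Finset.range k, cd f a b (zs i) (ys (i+1)) = ε := by
              rw [Finset.sum_eq_single_of_mem (k-1) (Finset.mem_range.mpr (by omega))]
              · have ha : zs (k-1) = O k := by
                  simp only [hzs, if_pos (by omega : k-1 < k)]
                  congr 1
                  omega
                have hb : ys (k-1+1) = r := by
                  simp only [hys]
                  rw [if_neg (by omega)]
                rw [ha, hb, hckr]
              · intro j hj hjne
                have hj' := Finset.mem_range.mp hj
                have he : zs j = ys (j+1) := by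
                  simp only [hys, hzs, if_pos hj', if_pos (by omega : j+1 < k)]
                rw [he, hczero]
            rw [h1, h2, zero_add]
          · have hk : k = 0 := by omega
            rw [hk]
            simp only [Finset.range_zero, Finset.sum_empty, add_zero]
            exact hcy
        refine ⟨ε, by rw [hε]; exact edist_ne_top _ _,
          ⟨k+1, ys, zs, hstep, hsum, hend ▸ hqG⟩,
          ⟨k+1, ys, zs, hstep, hcy, hint, hend ▸ hqG⟩⟩
  constructor
  · ext y
    simp only [Set.mem_diff, Set.mem_univ, true_and, Set.mem_iUnion, Set.mem_setOf_eq,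
      exists_prop]
    constructor
    · intro hyB
      obtain ⟨ε, hε, h1, -⟩ := key y hyB
      exact ⟨ε, hε, h1⟩
    · rintro ⟨ε, hε, h⟩
      exact hsubS ε hε y h
  · ext y
    simp only [Set.mem_diff, Set.mem_univ, true_and, Set.mem_iUnion, Set.mem_setOf_eq,
      exists_prop]
    constructor
    · intro hyB
      obtain ⟨ε, hε, -, h2⟩ := key y hyB
      exact ⟨ε, hε, h2⟩
    · rintro ⟨ε, hε, h⟩
      exact hsubC ε hε y h
end
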